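/- arXiv:2212.11644 — 3 statements merged into one kernel-verified Lean document; each statement's English description precedes it below -/
import Mathlib

section
/- If A is an n×n poset matrix and B is an m×m poset matrix, then the block matrix C = [[B, 0], [V, A']] is a poset matrix, where A' is A with its first row and column deleted, the top-right m×(n-1) block is zero, and the bottom-left (n-1)×m block V has entries v_{y,z} = A y 0 (the entry of A in row y, column 1) for every column z of V. (This is the first partial composition A ∘₁ B.) -/
def IsPosetMatrix {α : Type*} (A : α → α → Bool) : Prop :=
  (∀ i, A i i = true) ∧
  (∀ i j, i ≠ j → A i j = true → A j i = false) ∧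
  (∀ i j k, A i j = true → A j k = true → A i k = true)

/-- The first partial composition `A ∘₁ B`: the block matrix `[[B, 0], [V, A']]`
where `A'` is `A` with its first row and column deleted and every column of `V`
equals the first column of `A` (restricted to rows `2, …, n`).
Here `Sum.inl` indexes the `m` new elements (the copy of `B`) and `Sum.inr`
indexes the remaining `n` old elements of the `(n+1)`-element matrix `A`. -/
def comp1 {n m : ℕ} (A : Fin (n + 1) → Fin (n + 1) → Bool)
    (B : Fin m → Fin m → Bool) :
    (Fin m ⊕ Fin n) → (Fin m ⊕ Fin n) → Bool
  | Sum.inl p, Sum.inl q => B p q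
  | Sum.inl _, Sum.inr _ => false
  | Sum.inr y, Sum.inl _ => A y.succ 0
  | Sum.inr y, Sum.inr z => A y.succ z.succ

/-- The first partial composition `A ∘₁ B` of poset matrices is a poset matrix. -/
theorem comp1_isPosetMatrix {n m : ℕ} (A : Fin (n + 1) → Fin (n + 1) → Bool)
    (B : Fin m → Fin m → Bool) (hA : IsPosetMatrix A) (hB : IsPosetMatrix B) :
    IsPosetMatrix (comp1 A B) := by
  obtain ⟨hA1, hA2, hA3⟩ := hA
  obtain ⟨hB1, hB2, hB3⟩ := hB
  refine ⟨?_, ?_, ?_⟩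
  · rintro (p | y)
    · exact hB1 p
    · exact hA1 y.succ
  · rintro (p | y) (q | z) hne h <;> simp [comp1] at h ⊢
    · exact hB2 p q (fun e => hne (by rw [e])) h
    · exact hA2 y.succ z.succ (fun e => hne (by rw [Fin.succ_inj.mp e])) h
  · rintro (p | y) (q | z) (r | w) h1 h2 <;> simp [comp1] at h1 h2 ⊢
    · exact hB3 p q r h1 h2
    · exact h1
    · exact hA3 y.succ z.succ 0 h1 h2
    · exact hA3 y.succ z.succ w.succ h1 h2
end

section
/- If A is an n×n poset matrix and B is an m×m poset matrix, then the block matrix C = [[A', 0], [U, B]] is a poset matrix, where A' is A with its last row and column deleted, the top-right (n-1)×m block is zero, and the bottom-left m×(n-1) block U has entries u_{y,z} = A (n-1) z (the last row of A restricted to the first n-1 columns) for every row y of U. (This is the first partial composition A ∘ₙ B.) -/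
/-- The first partial composition `A ∘ₙ B`: the block matrix `[[A', 0], [U, B]]`
where `A'` is `A` with its last row and column deleted and every row of `U`
equals the last row of `A` (restricted to the first `n` columns).
Here `Sum.inl` indexes the remaining `n` old elements of the `(n+1)`-element
matrix `A` and `Sum.inr` indexes the `m` new elements (the copy of `B`). -/
def compLast {n m : ℕ} (A : Fin (n + 1) → Fin (n + 1) → Bool)
    (B : Fin m → Fin m → Bool) :
    (Fin n ⊕ Fin m) → (Fin n ⊕ Fin m) → Bool
  | Sum.inl y, Sum.inl z => A y.castSucc z.castSucc
  | Sum.inl _, Sum.inr _ => false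
  | Sum.inr _, Sum.inl z => A (Fin.last n) z.castSucc
  | Sum.inr p, Sum.inr q => B p q

/-- The first partial composition `A ∘ₙ B` of poset matrices is a poset matrix. -/
theorem compLast_isPosetMatrix {n m : ℕ} (A : Fin (n + 1) → Fin (n + 1) → Bool)
    (B : Fin m → Fin m → Bool) (hA : IsPosetMatrix A) (hB : IsPosetMatrix B) :
    IsPosetMatrix (compLast A B) := by
  obtain ⟨hAr, hAa, hAt⟩ := hA
  obtain ⟨hBr, hBa, hBt⟩ := hB
  refine ⟨?_, ?_, ?_⟩
  · rintro (y | p)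
    · exact hAr _
    · exact hBr _
  · rintro (y | p) (z | q) hne h <;> simp only [compLast] at h ⊢
    · exact hAa _ _ (fun e => hne (congrArg Sum.inl (Fin.castSucc_injective n e))) h
    · exact (Bool.false_ne_true h).elim
    · exact hBa _ _ (fun e => hne (congrArg Sum.inr e)) h
  · rintro (y | p) (z | q) (k | r) h1 h2 <;>
      simp only [compLast] at h1 h2 ⊢
    · exact hAt _ _ _ h1 h2
    · exact (Bool.false_ne_true h2).elim
    · exact (Bool.false_ne_true h1).elim
    · exact (Bool.false_ne_true h1).elim
    · exact hAt _ _ _ h1 h2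
    · exact (Bool.false_ne_true h2).elim
    · exact h2
    · exact hBt _ _ _ h1 h2
end

section
/- Duality is compatible with the first partial composition: for poset matrices A (n×n) and B (m×m) and any index i with 1 ≤ i ≤ n, the dual of A □ᵢ B equals A* □_{n-i+1} B*, where the dual M* of a poset matrix M is obtained by reversing the order (M* j i = M (σ i) (σ j) with σ the order-reversing permutation k ↦ n+1-k, i.e. transposing and reversing index order). -/
/-- The first partial composition `A □ᵢ B`: the row and column `i` of `A` are
deleted and replaced by a block copy of `B`.  `Sum.inl` indexes the old
elements (indices of `A` other than `i`), `Sum.inr` the new elements (indices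
of `B`).  Entries between two old indices are as in `A`, between two new
indices as in `B`; a new row inherits row `i` of `A` on old columns preceding
`i`, an old row following `i` inherits the entry `A y i` on new columns, and
all remaining mixed entries are `0`. -/
def pcomp {n m : ℕ} (A : Fin n → Fin n → Bool) (B : Fin m → Fin m → Bool)
    (i : Fin n) :
    ({x : Fin n // x ≠ i} ⊕ Fin m) → ({x : Fin n // x ≠ i} ⊕ Fin m) → Bool
  | Sum.inl y, Sum.inl z => A y.1 z.1
  | Sum.inr p, Sum.inr q => B p q
  | Sum.inr _, Sum.inl z => if z.1 < i then A i z.1 else false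
  | Sum.inl y, Sum.inr _ => if i < y.1 then A y.1 i else false

/-- The dual of a poset matrix: `(A*) y z = A (rev z) (rev y)`, where
`rev k = n - 1 - k` is the order-reversing relabeling `k ↦ n + 1 - k`
(in `1`-based notation). -/
def dualM {n : ℕ} (A : Fin n → Fin n → Bool) : Fin n → Fin n → Bool :=
  fun y z => A z.rev y.rev

/-- The order-reversing relabeling of the indices of `A □ᵢ B`, matching them
with the indices of `A* □_{n-i+1} B*`. -/
def revIdx {n m : ℕ} (i : Fin n) :
    ({x : Fin n // x ≠ i} ⊕ Fin m) → ({x : Fin n // x ≠ i.rev} ⊕ Fin m)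
  | Sum.inl x => Sum.inl ⟨x.1.rev, fun h => x.2 (Fin.rev_injective h)⟩
  | Sum.inr p => Sum.inr p.rev

/-- Duality is compatible with the first partial composition:
`(A □ᵢ B)* = A* □_{n-i+1} B*`.  The left-hand side below is the entry of
`A* □_{n-i+1} B*` at the reversed pair of indices, the right-hand side is the
corresponding entry of the dual of `A □ᵢ B`, i.e. the `(z, y)` entry of
`A □ᵢ B`. -/
theorem pcomp_dual {n m : ℕ} (A : Fin n → Fin n → Bool)
    (B : Fin m → Fin m → Bool) (i : Fin n)
    (hA : IsPosetMatrix A) (hB : IsPosetMatrix B) :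
    ∀ y z : {x : Fin n // x ≠ i} ⊕ Fin m,
      pcomp (dualM A) (dualM B) i.rev (revIdx i y) (revIdx i z) =
        pcomp A B i z y := by
  rintro (⟨y,hy⟩|p) (⟨z,hz⟩|q) <;>
    simp [pcomp, dualM, revIdx, Fin.rev_rev, Fin.rev_lt_rev]
end
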